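/- For every matrix A ∈ SL(2,ℤ), there exist an integer m ≥ 1 and integers b_1, …, b_{2m} and a sign ε ∈ {1, -1} such that ε·A = (X Y^{b_1})(X Y^{b_2})⋯(X Y^{b_{2m}}), where X = [[1,1],[0,1]] and Y = [[1,0],[-1,1]]. -/

import Mathlib

open Matrix

def Xm : Matrix.SpecialLinearGroup (Fin 2) ℤ :=
  ⟨!![1, 1; 0, 1], by norm_num [Matrix.det_fin_two_of]⟩

def Ym : Matrix.SpecialLinearGroup (Fin 2) ℤ :=
  ⟨!![1, 0; -1, 1], by norm_num [Matrix.det_fin_two_of]⟩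

def negI : Matrix.SpecialLinearGroup (Fin 2) ℤ :=
  ⟨!![-1, 0; 0, -1], by norm_num [Matrix.det_fin_two_of]⟩

abbrev SL2Z := Matrix.SpecialLinearGroup (Fin 2) ℤ

def fw (b : ℤ) : SL2Z := Xm * Ym ^ b

lemma Ym_inv : ((Ym⁻¹ : SL2Z) : Matrix (Fin 2) (Fin 2) ℤ) = !![1, 0; 1, 1] := by
  have h : Ym * ⟨!![1, 0; 1, 1], by norm_num [Matrix.det_fin_two_of]⟩ = 1 := by
    apply Subtype.ext
    show Ym.1 * !![(1:ℤ), 0; 1, 1] = 1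
    simp [Ym, Matrix.mul_fin_two]
    simp [Matrix.one_fin_two]
  rw [inv_eq_of_mul_eq_one_right h]

lemma Xm_inv : ((Xm⁻¹ : SL2Z) : Matrix (Fin 2) (Fin 2) ℤ) = !![1, -1; 0, 1] := by
  have h : Xm * ⟨!![1, -1; 0, 1], by norm_num [Matrix.det_fin_two_of]⟩ = 1 := by
    apply Subtype.ext
    show Xm.1 * !![(1:ℤ), -1; 0, 1] = 1
    simp [Xm, Matrix.mul_fin_two]
    simp [Matrix.one_fin_two]
  rw [inv_eq_of_mul_eq_one_right h]

lemma Ym_zpow (k : ℤ) :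
    ((Ym ^ k : SL2Z) : Matrix (Fin 2) (Fin 2) ℤ) = !![1, 0; -k, 1] := by
  induction k using Int.induction_on with
  | zero => rw [zpow_zero]; norm_num; exact Matrix.one_fin_two
  | succ n ih =>
      rw [_root_.zpow_add_one, Matrix.SpecialLinearGroup.coe_mul, ih]
      show _ = !![(1:ℤ), 0; -(n+1), 1]
      norm_num [Ym, Matrix.mul_fin_two]
      ring
  | pred n ih =>
      rw [_root_.zpow_sub_one, Matrix.SpecialLinearGroup.coe_mul, ih, Ym_inv]
      norm_num [Matrix.mul_fin_two]
      ring

lemma Xm_zpow (k : ℤ) :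
    ((Xm ^ k : SL2Z) : Matrix (Fin 2) (Fin 2) ℤ) = !![1, k; 0, 1] := by
  induction k using Int.induction_on with
  | zero => rw [zpow_zero]; norm_num; exact Matrix.one_fin_two
  | succ n ih =>
      rw [_root_.zpow_add_one, Matrix.SpecialLinearGroup.coe_mul, ih]
      show _ = !![(1:ℤ), n+1; 0, 1]
      norm_num [Xm, Matrix.mul_fin_two]
      ring
  | pred n ih =>
      rw [_root_.zpow_sub_one, Matrix.SpecialLinearGroup.coe_mul, ih, Xm_inv]
      norm_num [Matrix.mul_fin_two]
      ring

lemma fw_coe (b : ℤ) : ((fw b : SL2Z) : Matrix (Fin 2) (Fin 2) ℤ) = !![1 - b, 1; -b, 1] := by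
  rw [fw, Matrix.SpecialLinearGroup.coe_mul, Ym_zpow]
  norm_num [Xm, Matrix.mul_fin_two]
  ring

/-- `A` is a product of factors `X Y^b`. -/
def W (A : SL2Z) : Prop := ∃ l : List ℤ, A = (l.map fw).prod

lemma W_mul {A B : SL2Z} (hA : W A) (hB : W B) : W (A * B) := by
  obtain ⟨l₁, h₁⟩ := hA
  obtain ⟨l₂, h₂⟩ := hB
  exact ⟨l₁ ++ l₂, by rw [List.map_append, List.prod_append, h₁, h₂]⟩

lemma W_fw (b : ℤ) : W (fw b) := ⟨[b], by simp⟩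

lemma prod3 : fw 1 * fw 1 * fw 1 = negI := by
  apply Subtype.ext
  simp only [Matrix.SpecialLinearGroup.coe_mul, fw_coe, negI]
  norm_num [Matrix.mul_fin_two]

lemma prod2 : fw 2 * fw 2 = negI := by
  apply Subtype.ext
  simp only [Matrix.SpecialLinearGroup.coe_mul, fw_coe, negI]
  norm_num [Matrix.mul_fin_two]

lemma W_negI : W negI := ⟨[2, 2], by rw [← prod2]; simp⟩

lemma negI_sq : negI * negI = 1 := by
  apply Subtype.ext
  simp only [Matrix.SpecialLinearGroup.coe_mul]
  simp only [Matrix.SpecialLinearGroup.coe_mul, negI]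
  norm_num [Matrix.mul_fin_two]
  simp [Matrix.one_fin_two]

lemma W_one : W (1 : SL2Z) := by
  rw [← negI_sq]; exact W_mul W_negI W_negI

lemma W_Xinv : W (Xm⁻¹ : SL2Z) := by
  have h : (fw 1 * fw 0 * fw 1 * fw 2 * fw 2) * Xm = 1 := by
    apply Subtype.ext
    simp only [Matrix.SpecialLinearGroup.coe_mul]
    simp only [Matrix.SpecialLinearGroup.coe_mul, fw_coe, Xm]
    norm_num [Matrix.mul_fin_two]
    simp [Matrix.one_fin_two]
  rw [inv_eq_of_mul_eq_one_left h]
  refine ⟨[1, 0, 1, 2, 2], ?_⟩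
  simp [mul_assoc]

lemma W_X : W Xm := ⟨[0], by simp [fw]⟩

lemma W_Xzpow (k : ℤ) : W (Xm ^ k : SL2Z) := by
  induction k using Int.induction_on with
  | zero => rw [zpow_zero]; exact W_one
  | succ n ih => rw [_root_.zpow_add_one]; exact W_mul ih W_X
  | pred n ih => rw [_root_.zpow_sub_one]; exact W_mul ih W_Xinv

def Sm : SL2Z := ⟨!![0, -1; 1, 0], by norm_num [Matrix.det_fin_two_of]⟩

lemma W_Sm : W Sm := by
  have h : Sm = negI * (fw 1 * fw 0) := by
    apply Subtype.ext
    simp only [Matrix.SpecialLinearGroup.coe_mul]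
    simp only [Matrix.SpecialLinearGroup.coe_mul, fw_coe, Sm, negI]
    norm_num [Matrix.mul_fin_two]
  rw [h]
  exact W_mul W_negI (W_mul (W_fw 1) (W_fw 0))

lemma W_all (A : SL2Z) : W A := by
  generalize hn : ((A : Matrix (Fin 2) (Fin 2) ℤ) 1 0).natAbs = n
  induction n using Nat.strong_induction_on generalizing A with
  | _ n ih =>
    by_cases hc : (A : Matrix (Fin 2) (Fin 2) ℤ) 1 0 = 0
    · -- upper triangular case
      have hd := A.2
      rw [Matrix.det_fin_two] at hd
      rw [hc, mul_zero, sub_zero] at hd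
      rcases Int.eq_one_or_neg_one_of_mul_eq_one' hd with ⟨h1, h2⟩ | ⟨h1, h2⟩
      · have hAe : A = Xm ^ ((A : Matrix (Fin 2) (Fin 2) ℤ) 0 1) := by
          apply Subtype.ext
          rw [Xm_zpow]
          ext i j
          fin_cases i <;> fin_cases j <;> simp [h1, h2, hc]
        rw [hAe]; exact W_Xzpow _
      · have hAe : A = negI * Xm ^ (-((A : Matrix (Fin 2) (Fin 2) ℤ) 0 1)) := by
          apply Subtype.ext
          rw [Matrix.SpecialLinearGroup.coe_mul, Xm_zpow]
          show _ = negI.1 * _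
          rw [negI]
          ext i j
          fin_cases i <;> fin_cases j <;>
            simp [h1, h2, hc, Matrix.mul_apply, Fin.sum_univ_two]
        rw [hAe]; exact W_mul W_negI (W_Xzpow _)
    · -- Euclidean step
      set a := (A : Matrix (Fin 2) (Fin 2) ℤ) 0 0 with ha
      set c := (A : Matrix (Fin 2) (Fin 2) ℤ) 1 0 with hcc
      set q : ℤ := a / c with hq
      set M : SL2Z := ⟨!![0, 1; -1, q], by norm_num [Matrix.det_fin_two_of]⟩ with hM
      have key : (Xm ^ q * Sm) * M = 1 := by
        apply Subtype.ext
        simp only [Matrix.SpecialLinearGroup.coe_mul]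
        simp only [Matrix.SpecialLinearGroup.coe_mul, Xm_zpow, Sm, hM]
        norm_num [Matrix.mul_fin_two]
        simp [Matrix.one_fin_two]
      have hA : A = (Xm ^ q * Sm) * (M * A) := by
        rw [← mul_assoc, key, one_mul]
      have hentry : ((M * A : SL2Z) : Matrix (Fin 2) (Fin 2) ℤ) 1 0 = -a + q * c := by
        rw [Matrix.SpecialLinearGroup.coe_mul, hM]
        simp [Matrix.mul_apply, Fin.sum_univ_two, ← ha, ← hcc]
      have hlt : (((M * A : SL2Z) : Matrix (Fin 2) (Fin 2) ℤ) 1 0).natAbs < n := by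
        rw [hentry]
        have h1 : 0 ≤ a % c := Int.emod_nonneg a hc
        have h2 : a % c < |c| := Int.emod_lt_abs a hc
        have h3 : a % c = a - c * (a / c) := Int.emod_def a c
        have h5 : -a + q * c = -(a % c) := by rw [hq, h3]; ring
        rw [h5, Int.natAbs_neg]
        rw [Int.abs_eq_natAbs] at h2
        omega
      have hMA : W (M * A) := ih _ hlt (M * A) rfl
      rw [hA]
      exact W_mul (W_mul (W_Xzpow q) W_Sm) hMA

lemma ofFn_eq_map {m : ℕ} (l : List ℤ) (h : 2 * m = l.length) :
    (List.ofFn fun i : Fin (2 * m) => fw (l.get (Fin.cast h i))) = l.map fw := by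
  apply List.ext_getElem
  · simp [h]
  · intro i hi hi'
    simp [List.getElem_ofFn]

theorem sl2_standard_form (A : Matrix.SpecialLinearGroup (Fin 2) ℤ) :
    ∃ (m : ℕ), 1 ≤ m ∧ ∃ (b : Fin (2 * m) → ℤ) (e : Matrix.SpecialLinearGroup (Fin 2) ℤ),
      (e = 1 ∨ e = negI) ∧
      e * A = (List.ofFn fun i => Xm * Ym ^ (b i)).prod := by
  obtain ⟨l, hl⟩ := W_all A
  -- get a representation of e * A by a nonempty even-length list
  have main : ∃ (l₂ : List ℤ) (e : SL2Z), (e = 1 ∨ e = negI) ∧ l₂ ≠ [] ∧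
      Even l₂.length ∧ e * A = (l₂.map fw).prod := by
    rcases Nat.even_or_odd l.length with he | ho
    · by_cases hnil : l = []
      · refine ⟨[2, 2, 2, 2], 1, Or.inl rfl, by simp, ⟨2, by norm_num⟩, ?_⟩
        subst hnil
        simp at hl
        rw [hl, one_mul]
        have h44 : (([2, 2, 2, 2] : List ℤ).map fw).prod = (fw 2 * fw 2) * (fw 2 * fw 2) := by
          simp [mul_assoc]
        rw [h44, prod2, negI_sq]
      · exact ⟨l, 1, Or.inl rfl, hnil, he, by rw [one_mul, hl]⟩
    · refine ⟨[1, 1, 1] ++ l, negI, Or.inr rfl, by simp, ?_, ?_⟩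
      · obtain ⟨k, hk⟩ := ho
        rw [List.length_append]
        exact ⟨k + 2, by simp [hk]; omega⟩
      · rw [List.map_append, List.prod_append, ← hl, ← prod3]
        rw [show ([1, 1, 1] : List ℤ).map fw = [fw 1, fw 1, fw 1] from rfl]
        simp [mul_assoc]
  obtain ⟨l₂, e, he, hnil, ⟨m, hm⟩, heq⟩ := main
  have h2m : 2 * m = l₂.length := by omega
  have hm1 : 1 ≤ m := by
    rcases Nat.eq_zero_or_pos m with h | h
    · exfalso; apply hnil; apply List.eq_nil_of_length_eq_zero; omega
    · exact h
  refine ⟨m, hm1, fun i => l₂.get (Fin.cast h2m i), e, he, ?_⟩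
  have := ofFn_eq_map l₂ h2m
  rw [heq, ← this]
  rfl
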